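/- For a signed P3109 format f, if a and b are finite values of f with exponent(a) ≥ exponent(b), s is any faithful rounding of a+b in f, and |a+b| ≤ M_hi, then the real number s − a is exactly representable in f. -/

import Mathlib

/-- Finite value set of a signed P3109 format with precision `P` and
exponent range `emin ≤ emax`. -/
def Vf (P : ℕ) (emin emax : ℤ) : Set ℝ :=
  { x | ∃ m e : ℤ, |m| < 2 ^ P ∧ emin ≤ e ∧ e ≤ emax ∧
      x = (m : ℝ) * (2 : ℝ) ^ (e - (P : ℤ) + 1) }

/-- Largest finite magnitude. -/
noncomputable def Mhi (P : ℕ) (emax : ℤ) : ℝ :=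
  ((2 : ℝ) ^ P - 1) * (2 : ℝ) ^ (emax - (P : ℤ) + 1)

/-- Canonical exponent: `max (⌊log₂ |x|⌋) emin` for `x ≠ 0`, `emin` for `x = 0`. -/
noncomputable def expo (emin : ℤ) (x : ℝ) : ℤ :=
  if x = 0 then emin else max (Int.log 2 |x|) emin

/-- `s` is a faithful rounding of `r` in `V`: it is `r` itself if `r ∈ V`,
and otherwise a floating-point neighbor (predecessor or successor) of `r`. -/
def Faithful (V : Set ℝ) (r s : ℝ) : Prop :=
  s ∈ V ∧ (r ∈ V → s = r) ∧
    ((s ≤ r ∧ ∀ v ∈ V, v ≤ r → v ≤ s) ∨ (r ≤ s ∧ ∀ v ∈ V, r ≤ v → s ≤ v))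

/-- `s` is a round-to-nearest value of `r` in `V` (arbitrary tie-breaking). -/
def Nearest (V : Set ℝ) (r s : ℝ) : Prop :=
  s ∈ V ∧ ∀ v ∈ V, |s - r| ≤ |v - r|

section Helpers

variable {P : ℕ} {emin emax : ℤ}

lemma two_zpow_pos (z : ℤ) : (0:ℝ) < 2 ^ z := zpow_pos (by norm_num) z

lemma two_zpow_add (x y : ℤ) : (2:ℝ) ^ (x + y) = 2 ^ x * 2 ^ y :=
  zpow_add₀ (by norm_num) x y

lemma pow_split (P : ℕ) (e : ℤ) : (2:ℝ) ^ (e + 1) = 2 ^ P * 2 ^ (e - (P:ℤ) + 1) := by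
  rw [← zpow_natCast (2:ℝ) P, ← two_zpow_add]
  congr 1; omega

lemma pow_split' (hP : 1 ≤ P) (e : ℤ) :
    (2:ℝ) ^ e = 2 ^ (P - 1) * 2 ^ (e - (P:ℤ) + 1) := by
  rw [← zpow_natCast (2:ℝ) (P - 1), ← two_zpow_add]
  congr 1; omega

lemma hsplit {x y : ℤ} (hxy : y ≤ x) :
    (2:ℝ) ^ (x - (P:ℤ) + 1) = 2 ^ (x - y).toNat * 2 ^ (y - (P:ℤ) + 1) := by
  rw [← zpow_natCast (2:ℝ) (x - y).toNat, ← two_zpow_add]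
  congr 1; omega

lemma le_expo (x : ℝ) : emin ≤ expo emin x := by
  unfold expo; split
  · exact le_refl _
  · exact le_max_right _ _

lemma memVf (m e : ℤ) (hm : |m| < 2 ^ P) (h1 : emin ≤ e) (h2 : e ≤ emax) :
    (m:ℝ) * (2:ℝ) ^ (e - (P:ℤ) + 1) ∈ Vf P emin emax :=
  ⟨m, e, hm, h1, h2, rfl⟩

lemma int_pow_lemma (hP : 1 ≤ P) : (2:ℤ) ^ (P - 1) * 2 = 2 ^ P := by
  rw [← pow_succ]; congr 1; omega

lemma int_pow_pos : (1:ℤ) ≤ 2 ^ (P - 1) := one_le_pow₀ (by norm_num)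

lemma absVf (x : ℝ) (hx : x ∈ Vf P emin emax) : |x| ≤ Mhi P emax := by
  obtain ⟨m, e, hm, h1, h2, rfl⟩ := hx
  have hm' : |(m:ℝ)| ≤ 2 ^ P - 1 := by
    have h : |m| ≤ 2 ^ P - 1 := by omega
    exact_mod_cast h
  rw [abs_mul, abs_of_pos (two_zpow_pos _)]
  unfold Mhi
  have h4 : (2:ℝ) ^ (e - (P:ℤ) + 1) ≤ 2 ^ (emax - (P:ℤ) + 1) := by
    exact zpow_le_zpow_right₀ (by norm_num) (by omega)
  have h5 : (0:ℝ) ≤ 2 ^ P - 1 := by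
    have : (1:ℝ) ≤ 2 ^ P := one_le_pow₀ (by norm_num)
    linarith
  exact mul_le_mul hm' h4 (le_of_lt (two_zpow_pos _)) h5

lemma Mhi_lt : Mhi P emax < 2 ^ (emax + 1) := by
  unfold Mhi
  rw [pow_split P emax]
  have := two_zpow_pos (emax - (P:ℤ) + 1)
  nlinarith

lemma log2_lt {r : ℝ} (hr : 0 < r) {z : ℤ} (h : r < 2 ^ z) : Int.log 2 r < z :=
  (Int.lt_zpow_iff_log_lt (b := 2) (by norm_num) hr (x := z)).mp (by exact_mod_cast h)

lemma le_log2 {r : ℝ} (hr : 0 < r) {z : ℤ} (h : (2:ℝ) ^ z ≤ r) : z ≤ Int.log 2 r :=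
  (Int.zpow_le_iff_le_log (b := 2) (by norm_num) hr (x := z)).mp (by exact_mod_cast h)

lemma log2_self_le {r : ℝ} (hr : 0 < r) : (2:ℝ) ^ (Int.log 2 r) ≤ r := by
  have := Int.zpow_log_le_self (b := 2) (by norm_num) hr (R := ℝ)
  exact_mod_cast this

lemma lt_log2_succ (r : ℝ) : r < (2:ℝ) ^ (Int.log 2 r + 1) := by
  have := Int.lt_zpow_succ_log_self (b := 2) (by norm_num) r (R := ℝ)
  exact_mod_cast this

lemma canon (hP : 1 ≤ P) (he : emin ≤ emax) (x : ℝ) (hx : x ∈ Vf P emin emax) :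
    ∃ k : ℤ, |k| < 2 ^ P ∧ x = (k:ℝ) * 2 ^ (expo emin x - (P:ℤ) + 1) ∧
      expo emin x ≤ emax := by
  rcases eq_or_ne x 0 with h0 | h0
  · refine ⟨0, by simpa using pow_pos (by norm_num : (0:ℤ) < 2) P, by simp [h0], ?_⟩
    simp [expo, h0, he]
  obtain ⟨m, e, hm, h1, h2, hxe⟩ := hx
  have hxpos : 0 < |x| := abs_pos.mpr h0
  set E := expo emin x with hE
  have hEdef : E = max (Int.log 2 |x|) emin := by rw [hE]; unfold expo; rw [if_neg h0]
  have habs : |x| = |(m:ℝ)| * 2 ^ (e - (P:ℤ) + 1) := by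
    rw [hxe, abs_mul, abs_of_pos (two_zpow_pos _)]
  have hxlt : |x| < 2 ^ (e + 1) := by
    rw [habs, pow_split P e]
    have h2p : |(m:ℝ)| < 2 ^ P := by exact_mod_cast hm
    have := two_zpow_pos (e - (P:ℤ) + 1)
    nlinarith
  have hloge : Int.log 2 |x| ≤ e := by
    have := log2_lt hxpos hxlt; omega
  have hEe : E ≤ e := by rw [hEdef]; exact max_le hloge h1
  have hxltE : |x| < 2 ^ (E + 1) := by
    have h1' : |x| < 2 ^ (Int.log 2 |x| + 1) := lt_log2_succ _
    have h2' : (2:ℝ) ^ (Int.log 2 |x| + 1) ≤ 2 ^ (E + 1) := by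
      gcongr
      · norm_num
      · rw [hEdef]; have := le_max_left (Int.log 2 |x|) emin; omega
    linarith
  have hEmax : E ≤ emax := by
    have hxM : |x| ≤ Mhi P emax := absVf x ⟨m, e, hm, h1, h2, hxe⟩
    have hlt2 : |x| < 2 ^ (emax + 1) := lt_of_le_of_lt hxM Mhi_lt
    have := log2_lt hxpos hlt2
    rw [hEdef]; omega
  refine ⟨m * 2 ^ (e - E).toNat, ?_, ?_, hEmax⟩
  · have heq : x = ((m * 2 ^ (e - E).toNat : ℤ):ℝ) * 2 ^ (E - (P:ℤ) + 1) := by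
      rw [hxe, hsplit hEe]; push_cast; ring
    have habs2 : |x| = |((m * 2 ^ (e - E).toNat : ℤ):ℝ)| * 2 ^ (E - (P:ℤ) + 1) := by
      rw [heq, abs_mul, abs_of_pos (two_zpow_pos _)]
    rw [habs2, pow_split P E] at hxltE
    have hpos := two_zpow_pos (E - (P:ℤ) + 1)
    have hlt3 : |((m * 2 ^ (e - E).toNat : ℤ):ℝ)| < 2 ^ P := by
      by_contra hc
      push_neg at hc
      nlinarith
    exact_mod_cast hlt3
  · rw [hxe, hsplit hEe]; push_cast; ring

lemma gridVf (hP : 1 ≤ P) (e G : ℤ) (h1 : emin ≤ e) (h2 : e ≤ emax)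
    (hG : |G| ≤ 2 ^ P) (hG2 : |G| = 2 ^ P → e < emax) :
    (G:ℝ) * 2 ^ (e - (P:ℤ) + 1) ∈ Vf P emin emax := by
  rcases lt_or_eq_of_le hG with h | h
  · exact memVf G e h h1 h2
  · have he' : e + 1 ≤ emax := hG2 h
    have hlt : |(2:ℤ) ^ (P - 1)| < 2 ^ P := by
      rw [abs_of_nonneg (by positivity)]
      have := int_pow_lemma hP
      have := int_pow_pos (P := P)
      omega
    have hkey : ((2:ℝ) ^ (P - 1)) * 2 ^ ((e+1) - (P:ℤ) + 1) = (2:ℝ) ^ P * 2 ^ (e - (P:ℤ) + 1) := by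
      have a1 := pow_split P e
      have a2 := pow_split' hP (e + 1)
      rw [show (e + 1) - (P:ℤ) + 1 = e - (P:ℤ) + 2 by ring] at a2 ⊢
      linarith
    rcases (abs_eq (by positivity : (0:ℤ) ≤ 2 ^ P)).mp h with h' | h'
    · have heq : (G:ℝ) * 2 ^ (e - (P:ℤ) + 1)
          = (((2:ℤ) ^ (P - 1) : ℤ):ℝ) * 2 ^ ((e+1) - (P:ℤ) + 1) := by
        rw [h']; push_cast; rw [hkey]
      rw [heq]
      exact memVf _ (e+1) hlt (by omega) he'
    · have heq : (G:ℝ) * 2 ^ (e - (P:ℤ) + 1)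
          = ((-((2:ℤ) ^ (P - 1)) : ℤ):ℝ) * 2 ^ ((e+1) - (P:ℤ) + 1) := by
        rw [h']; push_cast; rw [neg_mul, neg_mul, hkey]
      rw [heq]
      exact memVf _ (e+1) (by rwa [abs_neg]) (by omega) he'

lemma expo_eq (x : ℝ) (E : ℤ) (hE : emin ≤ E) (h1 : (2:ℝ) ^ E ≤ |x|)
    (h2 : |x| < 2 ^ (E + 1)) : expo emin x = E := by
  have hx0 : x ≠ 0 := by
    intro h; rw [h] at h1; simp at h1; nlinarith [two_zpow_pos E]
  have hpos : 0 < |x| := abs_pos.mpr hx0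
  have l1 : E ≤ Int.log 2 |x| := le_log2 hpos h1
  have l2 : Int.log 2 |x| < E + 1 := log2_lt hpos h2
  unfold expo; rw [if_neg hx0]
  omega

lemma multU (hP : 1 ≤ P) (he : emin ≤ emax) (v : ℝ) (hv : v ∈ Vf P emin emax)
    (E : ℤ) (hE1 : emin ≤ E) (h1 : (2:ℝ) ^ E ≤ |v|) (h2 : |v| ≤ 2 ^ (E + 1)) :
    ∃ k : ℤ, v = (k:ℝ) * 2 ^ (E - (P:ℤ) + 1) := by
  rcases lt_or_eq_of_le h2 with h | h
  · obtain ⟨k, _, hkeq, _⟩ := canon hP he v hv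
    rw [expo_eq v E hE1 h1 h] at hkeq
    exact ⟨k, hkeq⟩
  · rcases (abs_eq (le_of_lt (two_zpow_pos (E+1)))).mp h with h' | h'
    · refine ⟨2^P, ?_⟩
      rw [h', pow_split P E]; push_cast; ring
    · refine ⟨-(2^P), ?_⟩
      rw [h', pow_split P E]; push_cast; ring

end Helpers


section Main

variable {P : ℕ} {emin emax : ℤ}

set_option maxHeartbeats 4000000 in
lemma case2 (hP : 1 ≤ P) (he : emin ≤ emax)
    (a b s : ℝ) (ka kb ea eb E : ℤ)
    (hka : |ka| < 2 ^ P) (hkb : |kb| < 2 ^ P)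
    (haeq : a = (ka:ℝ) * 2 ^ (ea - (P:ℤ) + 1))
    (hbeq : b = (kb:ℝ) * 2 ^ (eb - (P:ℤ) + 1))
    (hba : eb ≤ ea) (hea_max : ea ≤ emax) (heb_min : emin ≤ eb)
    (hE_lb : eb + 1 ≤ E) (hE_ub : E ≤ emax)
    (hrE1 : (2:ℝ) ^ E ≤ |a + b|) (hrE2 : |a + b| < 2 ^ (E + 1))
    (hsV : s ∈ Vf P emin emax)
    (hside : (s ≤ a + b ∧ ∀ v ∈ Vf P emin emax, v ≤ a + b → v ≤ s) ∨
             (a + b ≤ s ∧ ∀ v ∈ Vf P emin emax, a + b ≤ v → s ≤ v))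
    (hbound : |a + b| ≤ Mhi P emax) :
    s - a ∈ Vf P emin emax := by
  have hE_min : emin ≤ E := by omega
  have hupos : (0:ℝ) < 2 ^ (eb - (P:ℤ) + 1) := two_zpow_pos _
  have hUpos : (0:ℝ) < 2 ^ (E - (P:ℤ) + 1) := two_zpow_pos _
  have huapos : (0:ℝ) < 2 ^ (ea - (P:ℤ) + 1) := two_zpow_pos _
  have hEU : (2:ℝ) ^ (E + 1) = 2 ^ P * 2 ^ (E - (P:ℤ) + 1) := pow_split P E
  have hEU2 : (2:ℝ) ^ E = 2 ^ (P - 1) * 2 ^ (E - (P:ℤ) + 1) := pow_split' hP E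
  have hPu : (2:ℝ) ^ (eb + 1) = 2 ^ P * 2 ^ (eb - (P:ℤ) + 1) := pow_split P eb
  have h2P1 : (1:ℝ) ≤ 2 ^ (P - 1) := one_le_pow₀ (by norm_num)
  have h2Psplit : (2:ℝ) ^ P = 2 ^ (P - 1) * 2 := by
    rw [← pow_succ]; congr 1; omega
  have hrne : a + b ≠ 0 := by
    intro h0
    rw [h0] at hrE1
    simp at hrE1
    nlinarith [two_zpow_pos E]
  -- K and divisibility of r by u
  have hrK : a + b = ((ka * 2 ^ (ea - eb).toNat + kb : ℤ):ℝ) * 2 ^ (eb - (P:ℤ) + 1) := by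
    rw [haeq, hbeq, hsplit (P := P) hba]; push_cast; ring
  -- floor/ceil machinery
  have hrUU : ((a + b) / 2 ^ (E - (P:ℤ) + 1)) * 2 ^ (E - (P:ℤ) + 1) = a + b :=
    div_mul_cancel₀ _ (ne_of_gt hUpos)
  set F : ℤ := ⌊(a + b) / 2 ^ (E - (P:ℤ) + 1)⌋ with hF
  set C : ℤ := ⌈(a + b) / 2 ^ (E - (P:ℤ) + 1)⌉ with hC
  have hFle : (F:ℝ) * 2 ^ (E - (P:ℤ) + 1) ≤ a + b := by
    have h := Int.floor_le ((a + b) / 2 ^ (E - (P:ℤ) + 1))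
    have h2 := mul_le_mul_of_nonneg_right h hUpos.le
    rw [hrUU] at h2; exact h2
  have hFgt : a + b < (F:ℝ) * 2 ^ (E - (P:ℤ) + 1) + 2 ^ (E - (P:ℤ) + 1) := by
    have h := Int.lt_floor_add_one ((a + b) / 2 ^ (E - (P:ℤ) + 1))
    have h2 := mul_lt_mul_of_pos_right h hUpos
    rw [add_mul, hrUU] at h2; push_cast at h2 ⊢; linarith
  have hCge : a + b ≤ (C:ℝ) * 2 ^ (E - (P:ℤ) + 1) := by
    have h := Int.le_ceil ((a + b) / 2 ^ (E - (P:ℤ) + 1))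
    have h2 := mul_le_mul_of_nonneg_right h hUpos.le
    rw [hrUU] at h2; exact h2
  have hClt : (C:ℝ) * 2 ^ (E - (P:ℤ) + 1) < a + b + 2 ^ (E - (P:ℤ) + 1) := by
    have h := Int.ceil_lt_add_one ((a + b) / 2 ^ (E - (P:ℤ) + 1))
    have h2 := mul_lt_mul_of_pos_right h hUpos
    rw [add_mul, hrUU] at h2; push_cast at h2 ⊢; linarith
  have hrU_lt : (a + b) / 2 ^ (E - (P:ℤ) + 1) < 2 ^ P := by
    rw [div_lt_iff₀ hUpos]
    calc a + b ≤ |a + b| := le_abs_self _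
      _ < 2 ^ (E + 1) := hrE2
      _ = 2 ^ P * 2 ^ (E - (P:ℤ) + 1) := hEU
  have hrU_gt : -((2:ℝ) ^ P) < (a + b) / 2 ^ (E - (P:ℤ) + 1) := by
    rw [lt_div_iff₀ hUpos]
    have h1 : -(2 ^ (E + 1):ℝ) < a + b := by
      have := neg_abs_le (a + b); linarith
    rw [hEU] at h1; linarith
  have hF_ub : F ≤ 2 ^ P - 1 := by
    have h : F < 2 ^ P := by
      rw [hF, Int.floor_lt]; push_cast; exact hrU_lt
    omega
  have hF_lb : -(2 ^ P) ≤ F := by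
    rw [hF, Int.le_floor]; push_cast; linarith [hrU_gt]
  have hC_ub : C ≤ 2 ^ P := by
    rw [hC, Int.ceil_le]; push_cast; linarith [hrU_lt]
  have hC_lb : -(2 ^ P) + 1 ≤ C := by
    have h : -(2 ^ P) < C := by
      rw [hC, Int.lt_ceil]; push_cast; exact hrU_gt
    omega
  -- boundary: Mhi bound when E = emax
  have hMr : E = emax → |a + b| ≤ ((2:ℝ) ^ P - 1) * 2 ^ (E - (P:ℤ) + 1) := by
    intro hEq
    have : Mhi P emax = ((2:ℝ) ^ P - 1) * 2 ^ (E - (P:ℤ) + 1) := by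
      unfold Mhi; rw [hEq]
    rw [← this]; exact hbound
  have hF2 : |F| = 2 ^ P → E < emax := by
    intro habsF
    by_contra hc
    push_neg at hc
    have hEq : E = emax := le_antisymm hE_ub hc
    have hFeq : F = -(2 ^ P) := by
      rcases (abs_eq (by positivity : (0:ℤ) ≤ 2 ^ P)).mp habsF with h' | h'
      · omega
      · exact h'
    have h1 := hMr hEq
    have h2 : -(((2:ℝ) ^ P - 1) * 2 ^ (E - (P:ℤ) + 1)) ≤ a + b := by
      have := neg_abs_le (a + b); linarith
    have h3 : (F:ℝ) = -((2:ℝ) ^ P) := by rw [hFeq]; push_cast; ring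
    rw [h3] at hFgt
    nlinarith
  have hC2 : |C| = 2 ^ P → E < emax := by
    intro habsC
    by_contra hc
    push_neg at hc
    have hEq : E = emax := le_antisymm hE_ub hc
    have hCeq : C = 2 ^ P := by
      rcases (abs_eq (by positivity : (0:ℤ) ≤ 2 ^ P)).mp habsC with h' | h'
      · exact h'
      · omega
    have h1 := hMr hEq
    have h2 : a + b ≤ ((2:ℝ) ^ P - 1) * 2 ^ (E - (P:ℤ) + 1) := by
      have := le_abs_self (a + b); linarith
    have h3 : (C:ℝ) = (2:ℝ) ^ P := by rw [hCeq]; push_cast; ring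
    rw [h3] at hClt
    nlinarith
  have hFV : (F:ℝ) * 2 ^ (E - (P:ℤ) + 1) ∈ Vf P emin emax :=
    gridVf hP E F hE_min hE_ub (abs_le.mpr ⟨hF_lb, by omega⟩) hF2
  have hCV : (C:ℝ) * 2 ^ (E - (P:ℤ) + 1) ∈ Vf P emin emax :=
    gridVf hP E C hE_min hE_ub (abs_le.mpr ⟨by omega, hC_ub⟩) hC2
  -- key: |s - r| < U and 2^E ≤ |s| ≤ 2^(E+1)
  have key : |s - (a + b)| < 2 ^ (E - (P:ℤ) + 1) ∧
      (2:ℝ) ^ E ≤ |s| ∧ |s| ≤ 2 ^ (E + 1) := by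
    rcases hside with ⟨hs1, hmax⟩ | ⟨hs1, hmin⟩
    · have hFs : (F:ℝ) * 2 ^ (E - (P:ℤ) + 1) ≤ s := hmax _ hFV hFle
      have hd : |s - (a + b)| < 2 ^ (E - (P:ℤ) + 1) := by
        rw [abs_sub_comm, abs_of_nonneg (by linarith)]
        linarith
      rcases lt_or_gt_of_ne hrne with hneg | hpos
      · have habs_r : |a + b| = -(a + b) := abs_of_neg hneg
        have hs_neg : s < 0 := by linarith
        have habs_s : |s| = -s := abs_of_neg hs_neg
        refine ⟨hd, ?_, ?_⟩
        · rw [habs_s]; rw [habs_r] at hrE1; linarith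
        · rw [habs_s]
          have h1 : ((-(2 ^ P) : ℤ):ℝ) ≤ (F:ℝ) := by exact_mod_cast hF_lb
          push_cast at h1
          have h2 : -((2:ℝ) ^ P) * 2 ^ (E - (P:ℤ) + 1) ≤ (F:ℝ) * 2 ^ (E - (P:ℤ) + 1) :=
            mul_le_mul_of_nonneg_right h1 hUpos.le
          nlinarith
      · have habs_r : |a + b| = a + b := abs_of_pos hpos
        have hF_lb2 : ((2:ℝ) ^ (P - 1)) ≤ (F:ℝ) := by
          have h1 : ((2:ℝ) ^ (P - 1)) ≤ (a + b) / 2 ^ (E - (P:ℤ) + 1) := by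
            rw [le_div_iff₀ hUpos]
            rw [habs_r] at hrE1
            linarith [hEU2]
          have h2 : ((2:ℤ) ^ (P - 1)) ≤ F := by
            rw [hF, Int.le_floor]; push_cast; exact h1
          exact_mod_cast h2
        have hs_lb : (2:ℝ) ^ E ≤ s := by
          have h2 := mul_le_mul_of_nonneg_right hF_lb2 hUpos.le
          rw [← hEU2] at h2
          linarith
        have hs_pos : 0 < s := lt_of_lt_of_le (two_zpow_pos E) hs_lb
        refine ⟨hd, ?_, ?_⟩
        · rw [abs_of_pos hs_pos]; exact hs_lb
        · rw [abs_of_pos hs_pos]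
          rw [habs_r] at hrE2
          linarith
    · have hsC : s ≤ (C:ℝ) * 2 ^ (E - (P:ℤ) + 1) := hmin _ hCV hCge
      have hd : |s - (a + b)| < 2 ^ (E - (P:ℤ) + 1) := by
        rw [abs_of_nonneg (by linarith)]
        linarith
      rcases lt_or_gt_of_ne hrne with hneg | hpos
      · have habs_r : |a + b| = -(a + b) := abs_of_neg hneg
        have hC_ub2 : (C:ℝ) ≤ -((2:ℝ) ^ (P - 1)) := by
          have h1 : (a + b) / 2 ^ (E - (P:ℤ) + 1) ≤ -((2:ℝ) ^ (P - 1)) := by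
            rw [div_le_iff₀ hUpos]
            rw [habs_r] at hrE1
            nlinarith [hEU2]
          have h2 : C ≤ -((2:ℤ) ^ (P - 1)) := by
            rw [hC, Int.ceil_le]; push_cast; exact h1
          exact_mod_cast h2
        have hs_ub : s ≤ -((2:ℝ) ^ E) := by
          have h2 := mul_le_mul_of_nonneg_right hC_ub2 hUpos.le
          have h3 : -((2:ℝ) ^ (P - 1)) * 2 ^ (E - (P:ℤ) + 1) = -((2:ℝ) ^ E) := by
            rw [hEU2]; ring
          rw [h3] at h2
          linarith
        have hs_neg : s < 0 := by nlinarith [two_zpow_pos E]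
        refine ⟨hd, ?_, ?_⟩
        · rw [abs_of_neg hs_neg]; linarith
        · rw [abs_of_neg hs_neg]
          rw [habs_r] at hrE2
          linarith
      · have habs_r : |a + b| = a + b := abs_of_pos hpos
        have hs_pos : 0 < s := by
          rw [habs_r] at hrE1
          nlinarith [two_zpow_pos E]
        have hCr : (C:ℝ) ≤ (2:ℝ) ^ P := by
          have h2 : ((2:ℤ) ^ P : ℝ) = (2:ℝ) ^ P := by push_cast; ring
          rw [← h2]; exact_mod_cast hC_ub
        refine ⟨hd, ?_, ?_⟩
        · rw [abs_of_pos hs_pos]; rw [habs_r] at hrE1; linarith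
        · rw [abs_of_pos hs_pos]
          have h2 := mul_le_mul_of_nonneg_right hCr hUpos.le
          rw [← hEU] at h2
          linarith
  obtain ⟨hd, hs_lo, hs_hi⟩ := key
  obtain ⟨ks, hks⟩ := multU hP he s hsV E hE_min hs_lo hs_hi
  -- |s - r| ≤ U - u
  have hUu : (2:ℝ) ^ (E - (P:ℤ) + 1) = 2 ^ (E - eb).toNat * 2 ^ (eb - (P:ℤ) + 1) :=
    hsplit (P := P) (by omega)
  have hdelta : |s - (a + b)| ≤ 2 ^ (E - (P:ℤ) + 1) - 2 ^ (eb - (P:ℤ) + 1) := by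
    have hdkeq : s - (a + b) =
        ((ks * 2 ^ (E - eb).toNat - (ka * 2 ^ (ea - eb).toNat + kb) : ℤ):ℝ)
          * 2 ^ (eb - (P:ℤ) + 1) := by
      rw [hks, hrK, hUu]; push_cast; ring
    have habs_dk : |s - (a + b)| =
        |((ks * 2 ^ (E - eb).toNat - (ka * 2 ^ (ea - eb).toNat + kb) : ℤ):ℝ)|
          * 2 ^ (eb - (P:ℤ) + 1) := by
      rw [hdkeq, abs_mul, abs_of_pos hupos]
    have h1 : |((ks * 2 ^ (E - eb).toNat - (ka * 2 ^ (ea - eb).toNat + kb) : ℤ):ℝ)|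
        * 2 ^ (eb - (P:ℤ) + 1) < 2 ^ (E - eb).toNat * 2 ^ (eb - (P:ℤ) + 1) := by
      rw [← habs_dk, ← hUu]; exact hd
    have h2 : |ks * 2 ^ (E - eb).toNat - (ka * 2 ^ (ea - eb).toNat + kb)|
        < 2 ^ (E - eb).toNat := by
      have h3 := (mul_lt_mul_iff_of_pos_right hupos).mp h1
      exact_mod_cast h3
    have h4 : |ks * 2 ^ (E - eb).toNat - (ka * 2 ^ (ea - eb).toNat + kb)|
        ≤ 2 ^ (E - eb).toNat - 1 := by omega
    have h5 : |((ks * 2 ^ (E - eb).toNat - (ka * 2 ^ (ea - eb).toNat + kb) : ℤ):ℝ)|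
        ≤ 2 ^ (E - eb).toNat - 1 := by exact_mod_cast h4
    rw [habs_dk, hUu]
    nlinarith
  have hb_abs : |b| ≤ ((2:ℝ) ^ P - 1) * 2 ^ (eb - (P:ℤ) + 1) := by
    rw [hbeq, abs_mul, abs_of_pos hupos]
    have h1 : |(kb:ℝ)| ≤ 2 ^ P - 1 := by
      have : |kb| ≤ 2 ^ P - 1 := by omega
      exact_mod_cast this
    nlinarith
  have htb : |s - a| ≤ 2 ^ (E - (P:ℤ) + 1) + ((2:ℝ) ^ P - 2) * 2 ^ (eb - (P:ℤ) + 1) := by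
    have hsa : s - a = (s - (a + b)) + b := by ring
    calc |s - a| ≤ |s - (a + b)| + |b| := by rw [hsa]; exact abs_add_le _ _
      _ ≤ (2 ^ (E - (P:ℤ) + 1) - 2 ^ (eb - (P:ℤ) + 1))
          + ((2:ℝ) ^ P - 1) * 2 ^ (eb - (P:ℤ) + 1) := add_le_add hdelta hb_abs
      _ = 2 ^ (E - (P:ℤ) + 1) + ((2:ℝ) ^ P - 2) * 2 ^ (eb - (P:ℤ) + 1) := by ring
  by_cases hcase : E ≤ ea
  · -- Case I : t is a multiple of U
    have hteq : s - a = ((ks - ka * 2 ^ (ea - E).toNat : ℤ):ℝ) * 2 ^ (E - (P:ℤ) + 1) := by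
      rw [hks, haeq, hsplit (P := P) hcase]; push_cast; ring
    have hub : (2:ℝ) ^ (eb + 1) ≤ 2 ^ E := zpow_le_zpow_right₀ (by norm_num) (by omega)
    have habs_q : |s - a| = |((ks - ka * 2 ^ (ea - E).toNat : ℤ):ℝ)| * 2 ^ (E - (P:ℤ) + 1) := by
      rw [hteq, abs_mul, abs_of_pos hUpos]
    have hq_real : |((ks - ka * 2 ^ (ea - E).toNat : ℤ):ℝ)| * 2 ^ (E - (P:ℤ) + 1)
        < (1 + 2 ^ (P - 1)) * 2 ^ (E - (P:ℤ) + 1) := by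
      rw [← habs_q]
      have e1 : ((2:ℝ) ^ P - 2) * 2 ^ (eb - (P:ℤ) + 1) < (2:ℝ) ^ P * 2 ^ (eb - (P:ℤ) + 1) := by
        nlinarith
      nlinarith [htb, hPu, hub, hEU2]
    have hq_int : |ks - ka * 2 ^ (ea - E).toNat| ≤ 2 ^ (P - 1) := by
      have h5 := (mul_lt_mul_iff_of_pos_right hUpos).mp hq_real
      have h6 : |((ks - ka * 2 ^ (ea - E).toNat : ℤ):ℝ)| < ((1 + 2 ^ (P - 1) : ℤ):ℝ) := by
        push_cast; push_cast at h5; linarith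
      have h7 : |ks - ka * 2 ^ (ea - E).toNat| < 1 + 2 ^ (P - 1) := by exact_mod_cast h6
      omega
    have hq_lt : |ks - ka * 2 ^ (ea - E).toNat| < 2 ^ P := by
      have g1 := int_pow_lemma hP (P := P)
      have g2 := int_pow_pos (P := P)
      omega
    rw [hteq]
    exact memVf _ E hq_lt hE_min hE_ub
  · -- Case II : E = ea + 1, t is a multiple of ua
    push_neg at hcase
    have h2ka : |(ka:ℝ)| < 2 ^ P := by exact_mod_cast hka
    have hEea : E = ea + 1 := by
      have h1 : |a| < 2 ^ (ea + 1) := by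
        rw [haeq, abs_mul, abs_of_pos huapos, pow_split P ea]
        nlinarith
      have h2 : |b| < 2 ^ (eb + 1) := by
        have := hb_abs
        nlinarith
      have h3 : (2:ℝ) ^ (eb + 1) ≤ 2 ^ (ea + 1) := zpow_le_zpow_right₀ (by norm_num) (by omega)
      have h4 : |a + b| ≤ |a| + |b| := abs_add_le a b
      have h5 : (2:ℝ) ^ E < 2 ^ (ea + 2) := by
        have h6 : (2:ℝ) ^ (ea + 2) = 2 ^ (ea + 1) + 2 ^ (ea + 1) := by
          rw [show ea + 2 = (ea + 1) + 1 by ring, two_zpow_add]; ring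
        linarith [hrE1]
      have h7 : E < ea + 2 := by
        exact (zpow_lt_zpow_iff_right₀ (by norm_num : (1:ℝ) < 2)).mp h5
      omega
    have hUua : (2:ℝ) ^ (E - (P:ℤ) + 1) = 2 * 2 ^ (ea - (P:ℤ) + 1) := by
      rw [hEea, show ea + 1 - (P:ℤ) + 1 = 1 + (ea - (P:ℤ) + 1) by ring, two_zpow_add]
      norm_num
    have hteq : s - a = ((2 * ks - ka : ℤ):ℝ) * 2 ^ (ea - (P:ℤ) + 1) := by
      rw [hks, haeq, hUua]; push_cast; ring
    have habs_q : |s - a| = |((2 * ks - ka : ℤ):ℝ)| * 2 ^ (ea - (P:ℤ) + 1) := by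
      rw [hteq, abs_mul, abs_of_pos huapos]
    -- bound |2ks - ka| ≤ 2^P
    have hq_int : |2 * ks - ka| ≤ 2 ^ P := by
      have hq_real : |((2 * ks - ka : ℤ):ℝ)| * 2 ^ (ea - (P:ℤ) + 1)
          ≤ ((2:ℝ) ^ P) * 2 ^ (ea - (P:ℤ) + 1) := by
        rw [← habs_q]
        rcases eq_or_lt_of_le hba with hbb | hbb
        · -- eb = ea
          have hu_eq : (2:ℝ) ^ (eb - (P:ℤ) + 1) = 2 ^ (ea - (P:ℤ) + 1) := by rw [hbb]
          rw [hUua, hu_eq] at htb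
          nlinarith
        · -- eb < ea : 2 * u ≤ ua
          have hu2 : 2 * (2:ℝ) ^ (eb - (P:ℤ) + 1) ≤ 2 ^ (ea - (P:ℤ) + 1) := by
            have : (2:ℝ) ^ (eb - (P:ℤ) + 1 + 1) ≤ 2 ^ (ea - (P:ℤ) + 1) :=
              zpow_le_zpow_right₀ (by norm_num) (by omega)
            rw [two_zpow_add] at this
            linarith
          rw [hUua] at htb
          -- (2^P - 2) * u = (2^(P-1) - 1) * (2 u) ≤ (2^(P-1) - 1) * ua
          have h8 : ((2:ℝ) ^ P - 2) * 2 ^ (eb - (P:ℤ) + 1)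
              ≤ ((2:ℝ) ^ (P - 1) - 1) * 2 ^ (ea - (P:ℤ) + 1) := by
            have h9 : ((2:ℝ) ^ P - 2) * 2 ^ (eb - (P:ℤ) + 1)
                = ((2:ℝ) ^ (P - 1) - 1) * (2 * 2 ^ (eb - (P:ℤ) + 1)) := by
              rw [h2Psplit]; ring
            rw [h9]
            have h10 : (0:ℝ) ≤ (2:ℝ) ^ (P - 1) - 1 := by linarith
            nlinarith
          -- |t| ≤ 2 ua + (2^(P-1) - 1) ua = (2^(P-1) + 1) ua ≤ 2^P ua
          have h11 : (2:ℝ) ^ (P - 1) + 1 ≤ 2 ^ P := by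
            rw [h2Psplit]; linarith
          nlinarith
      have h12 := (mul_le_mul_iff_of_pos_right huapos).mp hq_real
      have h13 : |((2 * ks - ka : ℤ):ℝ)| ≤ (((2:ℤ) ^ P : ℤ):ℝ) := by push_cast; push_cast at h12; linarith
      exact_mod_cast h13
    have hea_min : emin ≤ ea := by omega
    rw [hteq]
    exact gridVf hP ea _ hea_min hea_max hq_int (fun _ => by omega)
  done

end Main

theorem fastTwoSum_exact_intermediate
    (P : ℕ) (emin emax : ℤ) (hP : 1 ≤ P) (he : emin ≤ emax)
    (a b s : ℝ) (ha : a ∈ Vf P emin emax) (hb : b ∈ Vf P emin emax)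
    (hexp : expo emin b ≤ expo emin a)
    (hs : Faithful (Vf P emin emax) (a + b) s)
    (hbound : |a + b| ≤ Mhi P emax) :
    s - a ∈ Vf P emin emax := by
  obtain ⟨hsV, hsr_eq, hside⟩ := hs
  obtain ⟨ka, hka, haeq, hea_max⟩ := canon hP he a ha
  obtain ⟨kb, hkb, hbeq, heb_max⟩ := canon hP he b hb
  by_cases hsmall : |a + b| < 2 ^ (expo emin b + 1)
  · have hupos := two_zpow_pos (expo emin b - (P:ℤ) + 1)
    have hrK : a + b = ((ka * 2 ^ (expo emin a - expo emin b).toNat + kb : ℤ):ℝ)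
        * 2 ^ (expo emin b - (P:ℤ) + 1) := by
      conv_lhs => rw [haeq, hbeq]
      rw [hsplit (P := P) hexp]
      push_cast; ring
    have habs : |a + b| = |((ka * 2 ^ (expo emin a - expo emin b).toNat + kb : ℤ):ℝ)|
        * 2 ^ (expo emin b - (P:ℤ) + 1) := by
      rw [hrK, abs_mul, abs_of_pos hupos]
    have hKlt : |ka * 2 ^ (expo emin a - expo emin b).toNat + kb| < 2 ^ P := by
      have h1 : |((ka * 2 ^ (expo emin a - expo emin b).toNat + kb : ℤ):ℝ)|
          * 2 ^ (expo emin b - (P:ℤ) + 1)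
          < 2 ^ P * 2 ^ (expo emin b - (P:ℤ) + 1) := by
        rw [← habs, ← pow_split P (expo emin b)]; exact hsmall
      have h2 := (mul_lt_mul_iff_of_pos_right hupos).mp h1
      exact_mod_cast h2
    have hrV : a + b ∈ Vf P emin emax := by
      rw [hrK]; exact memVf _ _ hKlt (le_expo b) heb_max
    have h3 : s - a = b := by rw [hsr_eq hrV]; ring
    rw [h3]; exact hb
  · push_neg at hsmall
    have hrpos : (0:ℝ) < |a + b| := lt_of_lt_of_le (two_zpow_pos _) hsmall
    have hE_lb : expo emin b + 1 ≤ Int.log 2 |a + b| := le_log2 hrpos hsmall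
    have hrE1 : (2:ℝ) ^ (Int.log 2 |a + b|) ≤ |a + b| := log2_self_le hrpos
    have hrE2 : |a + b| < 2 ^ (Int.log 2 |a + b| + 1) := lt_log2_succ _
    have hE_ub : Int.log 2 |a + b| ≤ emax := by
      have h1 : |a + b| < 2 ^ (emax + 1) := lt_of_le_of_lt hbound Mhi_lt
      have := log2_lt hrpos h1; omega
    exact case2 hP he a b s ka kb (expo emin a) (expo emin b) (Int.log 2 |a + b|)
      hka hkb haeq hbeq hexp hea_max (le_expo b) hE_lb hE_ub hrE1 hrE2 hsV hside hbound
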